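/- Let V be an infinite-dimensional vector space over a field F, α an infinite cardinal with α ≤ dim_F V, and z ∈ End_F(V) such that [z, a] ∈ I_α for all a ∈ End_F(V) and dim_F(ker z) < α. If W is a subspace of V with W ∩ z(W) = (0), then dim_F W < α. -/

import Mathlib

open Cardinal

/-- If all commutators `[z, a]` lie in `I_α` and `dim (ker z) < α`, then any subspace `W`
with `W ∩ z(W) = 0` satisfies `dim W < α`. -/
theorem small_of_disjoint_image (F V : Type*) [Field F] [AddCommGroup V] [Module F V]
    (hV : ℵ₀ ≤ Module.rank F V) (α : Cardinal) (hα : ℵ₀ ≤ α) (hα' : α ≤ Module.rank F V)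
    (z : Module.End F V)
    (hcomm : ∀ a : Module.End F V, LinearMap.rank (z * a - a * z) < α)
    (hker : Module.rank F (LinearMap.ker z) < α)
    (W : Submodule F V) (hW : W ⊓ W.map z = ⊥) :
    Module.rank F W < α := by
  classical
  by_contra h
  push_neg at h
  -- complement of (W ∩ ker z) inside W
  set K' : Submodule F W := (LinearMap.ker z).comap W.subtype with hK'def
  obtain ⟨W₀', hcompl⟩ := Submodule.exists_isCompl K'
  have hK'rank : Module.rank F K' < α := by
    refine lt_of_le_of_lt ?_ hker
    have hle : K'.map W.subtype ≤ LinearMap.ker z := by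
      rintro x ⟨y, hy, rfl⟩
      exact hy
    calc Module.rank F K'
        = Module.rank F (K'.map W.subtype) :=
          (Submodule.equivMapOfInjective W.subtype W.injective_subtype K').rank_eq
      _ ≤ Module.rank F (LinearMap.ker z) := Submodule.rank_mono hle
  have hW₀'rank : α ≤ Module.rank F W₀' := by
    by_contra h'
    push_neg at h'
    have : Module.rank F W ≤ Module.rank F W₀' + Module.rank F K' := by
      rw [← rank_top F W, ← hcompl.symm.sup_eq_top]
      exact Submodule.rank_add_le_rank_add_rank _ _
    exact absurd (h.trans this) (not_le.mpr (Cardinal.add_lt_of_lt hα h' hK'rank))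
  -- W₀ as a submodule of V
  set W₀ : Submodule F V := W₀'.map W.subtype with hW₀def
  have hW₀rank : α ≤ Module.rank F W₀ := by
    rwa [← (Submodule.equivMapOfInjective W.subtype W.injective_subtype W₀').rank_eq]
  have hW₀W : W₀ ≤ W := Submodule.map_subtype_le W W₀'
  have hW₀ker : ∀ x ∈ W₀, z x = 0 → x = 0 := by
    rintro x ⟨y, hy, rfl⟩ hzx
    have hyK : y ∈ K' := hzx
    have : y ∈ K' ⊓ W₀' := ⟨hyK, hy⟩
    rw [hcompl.inf_eq_bot] at this
    simpa using this
  -- z restricted to W₀ is injective, with image zW₀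
  set f : W₀ →ₗ[F] V := z ∘ₗ W₀.subtype with hfdef
  have hfinj : Function.Injective f := by
    rw [← LinearMap.ker_eq_bot, LinearMap.ker_eq_bot']
    rintro ⟨x, hx⟩ hfx
    exact Subtype.ext (hW₀ker x hx hfx)
  set zW₀ : Submodule F V := W₀.map z with hzW₀def
  have hrange : LinearMap.range f = zW₀ := by
    rw [hfdef, LinearMap.range_comp, Submodule.range_subtype]
  set e : W₀ ≃ₗ[F] zW₀ :=
    (LinearEquiv.ofInjective f hfinj).trans (LinearEquiv.ofEq _ _ hrange) with hedef
  have he : ∀ x : W₀, (e x : V) = z x := fun x => rfl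
  -- disjointness of W₀ and zW₀
  have hdisj : W₀ ⊓ zW₀ = ⊥ := by
    rw [← le_bot_iff, ← hW]
    exact inf_le_inf hW₀W (Submodule.map_mono hW₀W)
  -- a complement U of zW₀ containing W₀
  obtain ⟨T, hT⟩ := Submodule.exists_isCompl (W₀ ⊔ zW₀)
  set U : Submodule F V := W₀ ⊔ T with hUdef
  have hUW₀ : W₀ ≤ U := le_sup_left
  have hUcompl : IsCompl zW₀ U := by
    constructor
    · rw [disjoint_iff, inf_comm]
      have h2 : (W₀ ⊔ T) ⊓ (W₀ ⊔ zW₀) = W₀ := by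
        rw [sup_inf_assoc_of_le T (le_sup_left : W₀ ≤ W₀ ⊔ zW₀), inf_comm T,
          hT.inf_eq_bot, sup_bot_eq]
      have h3 : U ⊓ zW₀ ≤ W₀ := by
        rw [← h2]
        exact inf_le_inf_left _ le_sup_right
      rw [← le_bot_iff, ← hdisj]
      exact le_inf h3 inf_le_right
    · rw [codisjoint_iff, hUdef, ← sup_assoc, sup_comm zW₀ W₀, hT.sup_eq_top]
  set π : V →ₗ[F] zW₀ := zW₀.projectionOnto U hUcompl with hπdef
  set a : Module.End F V := W₀.subtype ∘ₗ (e.symm : zW₀ →ₗ[F] W₀) ∘ₗ π with hadef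
  -- the commutator acts as -1 on W₀
  have hkey : ∀ x : W₀, (z * a - a * z) (x : V) = -(x : V) := by
    intro x
    have hax : a (x : V) = 0 := by
      rw [hadef]
      simp [hπdef, Submodule.projectionOnto_apply_of_mem_right hUcompl (hUW₀ x.2)]
    have hzx : z (x : V) ∈ zW₀ := ⟨x, x.2, rfl⟩
    have hazx : a (z (x : V)) = (x : V) := by
      have h1 : π (z (x : V)) = ⟨z (x : V), hzx⟩ :=
        Submodule.linearProjOfIsCompl_apply_left hUcompl ⟨z (x : V), hzx⟩
      have h2 : e.symm ⟨z (x : V), hzx⟩ = x := by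
        apply e.injective
        rw [e.apply_symm_apply]
        exact Subtype.ext (he x).symm
      rw [hadef]
      simp only [LinearMap.coe_comp, Function.comp_apply, h1, Submodule.coe_subtype]
      exact congrArg Subtype.val h2
    simp [LinearMap.sub_apply, Module.End.mul_apply, hax, hazx]
  -- conclude: rank of the commutator is at least α
  have hfinal : α ≤ LinearMap.rank (z * a - a * z) := by
    have hcomp : LinearMap.rank ((z * a - a * z) ∘ₗ W₀.subtype) ≤
        LinearMap.rank (z * a - a * z) := LinearMap.rank_comp_le_left _ _
    have heq : (z * a - a * z) ∘ₗ W₀.subtype = -W₀.subtype := by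
      ext x
      simp [hkey x]
    rw [heq] at hcomp
    refine le_trans ?_ hcomp
    have : LinearMap.range (-W₀.subtype) = W₀ := by
      rw [LinearMap.range_neg, Submodule.range_subtype]
    rw [LinearMap.rank, this]
    exact hW₀rank
  exact absurd (hcomm a) (not_lt.mpr hfinal)
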